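/- Let p be a prime, let P be a finite p-group, and let A be a subgroup of Aut(P) whose order is not divisible by p. Then the natural homomorphism from A to Aut(P/Φ(P)) induced by reduction modulo the Frattini subgroup Φ(P) is injective; in other words, any p'-group of automorphisms of P is represented faithfully on P/Φ(P). -/

import Mathlib

open Subgroup SemidirectProduct
section
variable {P : Type*} [Group P] [Finite P]

lemma frattini_apply_mem (χ : MulAut P) {x : P}
    (hx : x ∈ frattini P) : χ x ∈ frattini P := by
  have := Subgroup.characteristic_iff_map_eq.mp
    (inferInstance : (frattini P).Characteristic) χ
  rw [← this]; exact Subgroup.mem_map_of_mem _ hx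

/-- Automorphisms acting trivially mod the Frattini subgroup form a subgroup. -/
def frattiniStab (P : Type*) [Group P] : Subgroup (MulAut P) where
  carrier := {χ | ∀ g : P, χ g * g⁻¹ ∈ frattini P}
  one_mem' := fun g => by simpa using (frattini P).one_mem
  mul_mem' := by
    intro χ₁ χ₂ h1 h2 g
    have : (χ₁ * χ₂) g * g⁻¹ = (χ₁ (χ₂ g) * (χ₂ g)⁻¹) * (χ₂ g * g⁻¹) := by
      simp [mul_assoc]
    rw [this]
    exact mul_mem (h1 _) (h2 g)
  inv_mem' := by
    intro χ h g
    have h2 : χ (χ⁻¹ g) * (χ⁻¹ g)⁻¹ ∈ frattini P := h _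
    rw [MulAut.apply_inv_self] at h2
    simpa using (frattini P).inv_mem h2

set_option maxHeartbeats 400000 in
lemma key (p q : ℕ) (hp : p.Prime) (hq : q.Prime) (hpq : p ≠ q) (hP : IsPGroup p P)
    (ψ : MulAut P) (hψ : ψ ∈ frattiniStab P) (hψq : orderOf ψ = q) : ψ = 1 := by
  classical
  haveI : Fact q.Prime := ⟨hq⟩
  haveI : Fact p.Prime := ⟨hp⟩
  set Q : Subgroup (MulAut P) := Subgroup.zpowers ψ with hQ
  have hQstab : Q ≤ frattiniStab P := (zpowers_le).mpr hψ
  -- the semidirect product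
  let H := P ⋊[Q.subtype] Q
  have eH : H ≃ P × Q :=
    ⟨fun x => (x.left, x.right), fun x => ⟨x.1, x.2⟩, fun x => rfl, fun x => rfl⟩
  haveI : Finite H := Finite.of_equiv _ eH.symm
  have cardH : Nat.card H = Nat.card P * q := by
    rw [Nat.card_congr eH, Nat.card_prod, Nat.card_zpowers, hψq]
  -- the subgroup Φ(P) ⋊ Q
  let K : Subgroup H :=
    { carrier := {x | x.left ∈ frattini P}
      one_mem' := by simpa using (frattini P).one_mem
      mul_mem' := by
        intro a b ha hb
        show a.left * (Q.subtype a.right) b.left ∈ frattini P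
        exact mul_mem ha (frattini_apply_mem (Q.subtype a.right) hb)
      inv_mem' := by
        intro a ha
        show (Q.subtype a.right⁻¹) a.left⁻¹ ∈ frattini P
        exact frattini_apply_mem _ (inv_mem ha) }
  have memK : ∀ x : H, x ∈ K ↔ x.left ∈ frattini P := fun x => Iff.rfl
  haveI : K.Normal := by
    constructor
    intro x hx h
    rw [memK] at hx ⊢
    obtain ⟨n, s⟩ := x
    obtain ⟨a, r⟩ := h
    have hc : (s : MulAut P) ((r : MulAut P)⁻¹ a⁻¹) * (((r : MulAut P)⁻¹ a⁻¹))⁻¹ ∈ frattini P :=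
      hQstab s.2 _
    have hleft : ((⟨a, r⟩ : H) * ⟨n, s⟩ * (⟨a, r⟩ : H)⁻¹).left
        = a * ((r : MulAut P) n *
          (r : MulAut P) ((s : MulAut P) ((r : MulAut P)⁻¹ a⁻¹) *
            (((r : MulAut P)⁻¹ a⁻¹))⁻¹)) * a⁻¹ := by
      show a * (Q.subtype r) n * (Q.subtype (r * s)) ((Q.subtype r⁻¹) a⁻¹) = _
      simp [mul_assoc]
    rw [hleft]
    exact (inferInstance : (frattini P).Normal).conj_mem _
      (mul_mem (frattini_apply_mem _ hx) (frattini_apply_mem _ hc)) a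
  -- the copy of Q inside H
  let Q' : Subgroup H := (inr : _ →* H).range
  have hQ'K : Q' ≤ K := by
    rintro x ⟨y, rfl⟩
    show (inr y : H).left ∈ frattini P
    rw [left_inr]
    exact (frattini P).one_mem
  have cardQ' : Nat.card Q' = q := by
    have h1 : Nat.card Q' = Nat.card Q :=
      Nat.card_congr (MonoidHom.ofInjective inr_injective).toEquiv.symm
    rw [h1, Nat.card_zpowers, hψq]
  have hQ'grp : IsPGroup q Q' := IsPGroup.of_card (by rw [cardQ', pow_one])
  have hqpos : 0 < q := hq.pos
  have hindex : Q'.index = Nat.card P := by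
    have h2 : Nat.card Q' * Q'.index = Nat.card H := Subgroup.card_mul_index Q'
    rw [cardQ', cardH, mul_comm (Nat.card P) q] at h2
    exact Nat.eq_of_mul_eq_mul_left hqpos h2
  have hndvd : ¬ q ∣ Q'.index := by
    obtain ⟨n, hn⟩ := IsPGroup.exists_card_eq hP
    rw [hindex, hn]
    intro hdvd
    exact hpq ((Nat.prime_dvd_prime_iff_eq hq hp).mp (hq.dvd_of_dvd_pow hdvd)).symm
  let S : Sylow q H := hQ'grp.toSylow hndvd
  have hS : (S : Subgroup H) = Q' := IsPGroup.toSylow_coe hQ'grp hndvd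
  have frattArg : normalizer ((S : Subgroup H) : Set H) ⊔ K = ⊤ :=
    Sylow.normalizer_sup_eq_top' S (by rw [hS]; exact hQ'K)
  -- the copy of frattini P inside H
  let R : Subgroup H := (frattini P).map (inl : P →* H)
  have hKsup : K ≤ R ⊔ Q' := by
    intro x hx
    rw [memK] at hx
    rw [← inl_left_mul_inr_right x]
    exact mul_mem (Subgroup.mem_sup_left (Subgroup.mem_map_of_mem inl hx))
      (Subgroup.mem_sup_right ⟨x.right, rfl⟩)
  have hNR : normalizer ((S : Subgroup H) : Set H) ⊔ R = ⊤ := by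
    rw [eq_top_iff, ← frattArg]
    refine sup_le le_sup_left (le_trans hKsup (sup_le ?_ ?_))
    · exact le_sup_right
    · exact le_trans (hS ▸ Subgroup.le_normalizer) le_sup_left
  haveI : R.Normal := by
    constructor
    rintro x ⟨m, hm, rfl⟩ h
    obtain ⟨a, r⟩ := h
    have e : (⟨a, r⟩ : H) * inl m * (⟨a, r⟩ : H)⁻¹ = inl (a * (r : MulAut P) m * a⁻¹) := by
      refine SemidirectProduct.ext ?_ ?_
      · show a * (Q.subtype r) m * (Q.subtype (r * 1)) ((Q.subtype r⁻¹) a⁻¹) = _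
        simp [mul_assoc]
      · show r * 1 * r⁻¹ = 1
        simp
    rw [e]
    exact Subgroup.mem_map_of_mem inl
      ((inferInstance : (frattini P).Normal).conj_mem _ (frattini_apply_mem _ hm) a)
  -- every element of (the copy of) P normalizes S
  have hPnorm : ∀ g : P, (inl g : H) ∈ normalizer ((S : Subgroup H) : Set H) := by
    have hT : ((normalizer ((S : Subgroup H) : Set H)).comap (inl : P →* H)) ⊔ frattini P = ⊤ := by
      rw [eq_top_iff']
      intro g
      have hg : (inl g : H) ∈ (normalizer ((S : Subgroup H) : Set H) ⊔ R : Subgroup H) := by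
        rw [hNR]; trivial
      rw [← SetLike.mem_coe, Subgroup.mul_normal] at hg
      obtain ⟨y, hy, c, hc, hyc⟩ := hg
      obtain ⟨m, hm, rfl⟩ := hc
      have hy' : y = inl (g * m⁻¹) := by
        rw [map_mul, map_inv]
        exact (mul_inv_eq_iff_eq_mul.mpr hyc.symm).symm
      have h3 : g * m⁻¹ ∈ (normalizer ((S : Subgroup H) : Set H)).comap (inl : P →* H) := by
        rw [Subgroup.mem_comap, ← hy']; exact hy
      simpa using Subgroup.mul_mem_sup h3 hm
    have hTtop := frattini_nongenerating hT
    intro g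
    have hg : g ∈ (⊤ : Subgroup P) := trivial
    rw [← hTtop, Subgroup.mem_comap] at hg
    exact hg
  -- conclude ψ = 1
  have claim : ∀ g : P, g * ψ g⁻¹ = 1 := by
    intro g
    have hmem : (inr ⟨ψ, Subgroup.mem_zpowers ψ⟩ : H) ∈ (S : Subgroup H) := by
      rw [hS]; exact ⟨_, rfl⟩
    have h4 := (Subgroup.mem_normalizer_iff.mp (hPnorm g) _).mp hmem
    rw [hS] at h4
    obtain ⟨y, hy⟩ := h4
    have e : (inl g * inr ⟨ψ, Subgroup.mem_zpowers ψ⟩ * (inl g)⁻¹ : H).left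
        = g * ψ g⁻¹ := by
      show g * (Q.subtype 1) (1 : P) * (Q.subtype ((1 : Q) * ⟨ψ, Subgroup.mem_zpowers ψ⟩))
        ((Q.subtype (1 : Q)⁻¹) g⁻¹) = g * ψ g⁻¹
      simp
    rw [← hy, left_inr] at e
    exact e.symm
  ext g
  have h5 := claim g⁻¹
  rw [inv_inv] at h5
  have h6 : ψ g = g := by
    have h7 : (g⁻¹)⁻¹ * (g⁻¹ * ψ g) = (g⁻¹)⁻¹ * 1 := by rw [h5]
    rwa [← mul_assoc, inv_mul_cancel, one_mul, mul_one, inv_inv] at h7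
  rw [MulAut.one_apply]
  exact h6

end

/-- Hall. If `P` is a finite `p`-group and `A ≤ Aut P` has order coprime
to `p`, then `A` acts faithfully on `P/Φ(P)`: any `φ ∈ A` inducing the identity automorphism
modulo the Frattini subgroup (i.e. with `φ g ≡ g mod Φ(P)` for all `g`) is the identity. -/
theorem pGroup_coprime_automorphisms_faithful_on_frattini_quotient
    {P : Type*} [Group P] [Finite P] (p : ℕ) (hp : p.Prime) (hP : IsPGroup p P)
    (A : Subgroup (MulAut P)) (hA : (Nat.card A).Coprime p) :
    ∀ φ ∈ A, (∀ g : P, φ g * g⁻¹ ∈ frattini P) → φ = 1 := by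
  intro φ hφA h
  by_contra hne
  have hφstab : φ ∈ frattiniStab P := h
  have hord : orderOf φ ∣ Nat.card A := by
    have : orderOf (⟨φ, hφA⟩ : A) ∣ Nat.card A := orderOf_dvd_natCard _
    rwa [Subgroup.orderOf_mk] at this
  have hcop : (orderOf φ).Coprime p := Nat.Coprime.coprime_dvd_left hord hA
  have hne0 : orderOf φ ≠ 0 := (orderOf_pos φ).ne'
  have hne1 : orderOf φ ≠ 1 := fun h1 => hne (orderOf_eq_one_iff.mp h1)
  have hq : (orderOf φ).minFac.Prime := Nat.minFac_prime hne1
  have hqd : (orderOf φ).minFac ∣ orderOf φ := Nat.minFac_dvd _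
  have hpq : p ≠ (orderOf φ).minFac := by
    intro hpe
    have hcp : Nat.Coprime p p := Nat.Coprime.coprime_dvd_left (hpe ▸ hqd) hcop
    exact hp.ne_one ((Nat.coprime_self p).mp hcp)
  have hψstab : φ ^ (orderOf φ / (orderOf φ).minFac) ∈ frattiniStab P :=
    pow_mem hφstab _
  have hψq : orderOf (φ ^ (orderOf φ / (orderOf φ).minFac)) = (orderOf φ).minFac :=
    orderOf_pow_orderOf_div hne0 hqd
  have hone := key p (orderOf φ).minFac hp hq hpq hP _ hψstab hψq
  rw [hone, orderOf_one] at hψq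
  exact hq.one_lt.ne' hψq.symm
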